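/- Let (Ω, μ) be a probability space, let f : Ω → ℝ be measurable with 0 ≤ f(ω) ≤ 1 for all ω ∈ Ω, and let δ > 0 and 0 < ε ≤ 1. Suppose that (μ × μ)({(u, u') ∈ Ω × Ω : |f(u) − f(u')| ≥ δ}) ≤ ε². Then μ({u ∈ Ω : |f(u) − ∫ f dμ| > δ + ε}) ≤ ε. -/

import Mathlib

open MeasureTheory

/-- Let `(Ω, μ)` be a probability space, `f : Ω → ℝ` measurable with
`0 ≤ f ≤ 1`, `δ > 0`, `0 < ε ≤ 1`. If `(μ × μ) {(u,u') : |f u − f u'| ≥ δ} ≤ ε²`, then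
`μ {u : |f u − ∫ f dμ| > δ + ε} ≤ ε`. -/
theorem stmt_5 {Ω : Type*} [MeasurableSpace Ω] (μ : Measure Ω) [IsProbabilityMeasure μ]
    (f : Ω → ℝ) (hf : Measurable f)
    (hf0 : ∀ ω, 0 ≤ f ω) (hf1 : ∀ ω, f ω ≤ 1)
    (δ ε : ℝ) (hδ : 0 < δ) (hε : 0 < ε) (hε1 : ε ≤ 1)
    (hpair : (μ.prod μ) {p : Ω × Ω | δ ≤ |f p.1 - f p.2|} ≤ ENNReal.ofReal (ε ^ 2)) :
    μ {u | δ + ε < |f u - ∫ x, f x ∂μ|} ≤ ENNReal.ofReal ε := by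
  set m := ∫ x, f x ∂μ with hm
  have hfint : Integrable f μ := (integrable_const 1).mono' hf.aestronglyMeasurable
    (ae_of_all _ fun ω => by rw [Real.norm_eq_abs, abs_le]; exact ⟨by linarith [hf0 ω], hf1 ω⟩)
  set A := {u | δ + ε < |f u - m|} with hA
  have hBmeas : MeasurableSet {p : Ω × Ω | δ ≤ |f p.1 - f p.2|} :=
    measurableSet_le measurable_const
      (((hf.comp measurable_fst).sub (hf.comp measurable_snd)).abs)
  have hSmeas : ∀ u, MeasurableSet {x | δ ≤ |f u - f x|} := fun u =>
    measurableSet_le measurable_const ((measurable_const.sub hf).abs)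
  have key : ∀ u ∈ A, ENNReal.ofReal ε ≤ μ {x | δ ≤ |f u - f x|} := by
    intro u hu
    set S := {x | δ ≤ |f u - f x|} with hS
    by_contra h
    push_neg at h
    have hμS : (μ S).toReal < ε := ENNReal.toReal_lt_of_lt_ofReal h
    have hb : ∀ x, |f u - f x| ≤ δ + S.indicator (fun _ => (1:ℝ)) x := by
      intro x
      by_cases hx : x ∈ S
      · rw [Set.indicator_of_mem hx]
        have : |f u - f x| ≤ 1 := abs_le.2 ⟨by linarith [hf0 u, hf1 x], by linarith [hf1 u, hf0 x]⟩
        linarith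
      · rw [Set.indicator_of_notMem hx]
        have : ¬ δ ≤ |f u - f x| := hx
        push_neg at this
        linarith
    have hind : Integrable (S.indicator (fun _ => (1:ℝ))) μ :=
      (integrable_const 1).indicator (hSmeas u)
    have habs : Integrable (fun x => |f u - f x|) μ := ((integrable_const (f u)).sub hfint).abs
    have h1 : |f u - m| ≤ δ + (μ S).toReal := by
      have heq : f u - m = ∫ x, (f u - f x) ∂μ := by
        rw [integral_sub (integrable_const _) hfint, integral_const, probReal_univ]
        simp [hm]
      rw [heq]
      calc |∫ x, (f u - f x) ∂μ| ≤ ∫ x, |f u - f x| ∂μ := by simpa [Real.norm_eq_abs] using norm_integral_le_integral_norm (fun x => f u - f x)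
        _ ≤ ∫ x, (δ + S.indicator (fun _ => (1:ℝ)) x) ∂μ :=
            integral_mono habs ((integrable_const δ).add hind) hb
        _ = δ + (μ S).toReal := by
            rw [integral_add (integrable_const δ) hind, integral_const, probReal_univ,
              integral_indicator_const (1:ℝ) (hSmeas u)]
            simp [Measure.real, hS]
    have : δ + ε < |f u - m| := hu
    linarith
  have hmeas_fn : Measurable fun u => μ {x | δ ≤ |f u - f x|} := by
    exact measurable_measure_prodMk_left hBmeas
  have hAmeas : MeasurableSet A :=
    measurableSet_lt measurable_const ((hf.sub measurable_const).abs)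
  have hmain : ENNReal.ofReal ε * μ A ≤ ENNReal.ofReal ε * ENNReal.ofReal ε := by
    calc ENNReal.ofReal ε * μ A = ∫⁻ _ in A, ENNReal.ofReal ε ∂μ := by
          rw [setLIntegral_const]
      _ ≤ ∫⁻ u in A, μ {x | δ ≤ |f u - f x|} ∂μ :=
          setLIntegral_mono hmeas_fn key
      _ ≤ ∫⁻ u, μ {x | δ ≤ |f u - f x|} ∂μ := setLIntegral_le_lintegral _ _
      _ = (μ.prod μ) {p : Ω × Ω | δ ≤ |f p.1 - f p.2|} := by
          rw [Measure.prod_apply hBmeas]; rfl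
      _ ≤ ENNReal.ofReal (ε ^ 2) := hpair
      _ = ENNReal.ofReal ε * ENNReal.ofReal ε := by
          rw [sq, ENNReal.ofReal_mul hε.le]
  exact (ENNReal.mul_le_mul_iff_right (by simp [hε]) ENNReal.ofReal_ne_top).mp hmain
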